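/- Let n ≥ 1, ζ ≥ 1, and let g_μ(x) = ⟨w_μ, x⟩ + b_μ (μ = 1,…,ζ) be affine functionals on ℝⁿ with w_μ ≠ 0. Let R_1,…,R_ζ ⊆ [0,1]ⁿ be nonempty sets such that: (i) for every ν = 2,…,ζ and every j < ν, R_j ⊆ {x : g_ν(x) ≤ 0}; (ii) for every i = 1,…,ζ and every μ ≤ i, R_i ⊆ {x : g_μ(x) ≥ 0}. Let s_1,…,s_ζ be affine functions on ℝⁿ such that for every ν = 2,…,ζ, s_ν = s_{ν−1} on the hyperplane {x : g_ν(x) = 0}. Then there exist parameters v_k ∈ ℝⁿ, c_k, λ_k ∈ ℝ (k = 1,…,ζ+n) such that for every i and every x ∈ R_i, Σ_{k=1}^{ζ+n} λ_k · max(0, ⟨v_k, x⟩ + c_k) = s_i(x). That is, a two-layer ReLU network with ζ+n hidden units realizes the continuous linear spline with pieces s_i on the ordered regions R_i. -/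
import Mathlib


open Set Finset
lemma affine_factor {n : ℕ} (w p : Fin n → ℝ) (b q : ℝ) (hw : w ≠ 0)
    (h : ∀ x : Fin n → ℝ, (∑ t, w t * x t) + b = 0 → (∑ t, p t * x t) + q = 0) :
    ∃ α : ℝ, ∀ x : Fin n → ℝ, (∑ t, p t * x t) + q = α * ((∑ t, w t * x t) + b) := by
  have hW : 0 < ∑ t, w t * w t := by
    obtain ⟨t0, ht0⟩ := Function.ne_iff.mp hw
    exact Finset.sum_pos' (fun t _ => mul_self_nonneg _)
      ⟨t0, Finset.mem_univ _, mul_self_pos.mpr ht0⟩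
  set W := ∑ t, w t * w t with hWdef
  refine ⟨(∑ t, p t * w t) / W, fun x => ?_⟩
  set g := (∑ t, w t * x t) + b with hg
  have h0 : (∑ t, w t * ((fun t => x t - (g / W) * w t) t)) + b = 0 := by
    simp only [mul_sub, Finset.sum_sub_distrib]
    have : ∑ t, w t * ((g / W) * w t) = g / W * W := by
      rw [Finset.mul_sum]; congr 1; ext t; ring
    rw [this, div_mul_cancel₀ _ hW.ne']
    rw [hg]; ring
  have h1 := h _ h0
  simp only [mul_sub, Finset.sum_sub_distrib] at h1
  have h2 : ∑ t, p t * ((g / W) * w t) = g / W * ∑ t, p t * w t := by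
    rw [Finset.mul_sum]; congr 1; ext t; ring
  rw [h2] at h1
  field_simp at h1 ⊢
  linarith


/-- An affine function on `ℝⁿ`, i.e. `x ↦ ⟨a, x⟩ + c`. -/
def IsAffineFn {n : ℕ} (s : (Fin n → ℝ) → ℝ) : Prop :=
  ∃ (a : Fin n → ℝ) (c : ℝ), ∀ x, s x = (∑ i, a i * x i) + c

/-- Approximation over a single strict partial order: a
continuous linear spline with pieces `s₁,…,s_ζ` on ordered regions
`R₁,…,R_ζ ⊆ [0,1]ⁿ` is realized exactly by a two-layer ReLU network with
`ζ + n` hidden units. -/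
theorem spline_over_strict_partial_order_realized
    (n ζ : ℕ) (hn : 1 ≤ n) (hζ : 1 ≤ ζ)
    (w : ℕ → Fin n → ℝ) (b : ℕ → ℝ)
    (hw : ∀ μ, 1 ≤ μ → μ ≤ ζ → w μ ≠ 0)
    (R : ℕ → Set (Fin n → ℝ))
    (hRne : ∀ i, 1 ≤ i → i ≤ ζ → (R i).Nonempty)
    (hRsub : ∀ i, 1 ≤ i → i ≤ ζ → R i ⊆ Icc (0 : Fin n → ℝ) 1)
    (hzero : ∀ ν, 2 ≤ ν → ν ≤ ζ → ∀ j, 1 ≤ j → j < ν →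
      ∀ x ∈ R j, (∑ t, w ν t * x t) + b ν ≤ 0)
    (hpos : ∀ i, 1 ≤ i → i ≤ ζ → ∀ μ, 1 ≤ μ → μ ≤ i →
      ∀ x ∈ R i, 0 ≤ (∑ t, w μ t * x t) + b μ)
    (s : ℕ → (Fin n → ℝ) → ℝ)
    (hsa : ∀ i, 1 ≤ i → i ≤ ζ → IsAffineFn (s i))
    (hcont : ∀ ν, 2 ≤ ν → ν ≤ ζ → ∀ x, (∑ t, w ν t * x t) + b ν = 0 →
      s ν x = s (ν - 1) x) :
    ∃ (v : Fin (ζ + n) → Fin n → ℝ) (c lam : Fin (ζ + n) → ℝ),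
      ∀ i, 1 ≤ i → i ≤ ζ → ∀ x ∈ R i,
        (∑ k, lam k * max 0 ((∑ t, v k t * x t) + c k)) = s i x := by
  classical
  obtain ⟨a1, c1, hs1⟩ := hsa 1 le_rfl hζ
  have key : ∀ ν, 2 ≤ ν → ν ≤ ζ → ∃ α : ℝ, ∀ x,
      s ν x - s (ν-1) x = α * ((∑ t, w ν t * x t) + b ν) := by
    intro ν h2 hν
    obtain ⟨aν, cν, hν'⟩ := hsa ν (by omega) hν
    obtain ⟨aμ, cμ, hμ'⟩ := hsa (ν-1) (by omega) (by omega)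
    obtain ⟨α, hα⟩ := affine_factor (w ν) (fun t => aν t - aμ t) (b ν) (cν - cμ)
      (hw ν (by omega) hν) (by
        intro x hx
        have hc := hcont ν h2 hν x hx
        rw [hν', hμ'] at hc
        simp only [sub_mul, Finset.sum_sub_distrib]
        linarith)
    refine ⟨α, fun x => ?_⟩
    have := hα x
    simp only [sub_mul, Finset.sum_sub_distrib] at this
    rw [hν', hμ']
    linarith
  set A : ℕ → ℝ := fun ν => if h : 2 ≤ ν ∧ ν ≤ ζ then (key ν h.1 h.2).choose else 0 with hA
  have hAspec : ∀ ν, 2 ≤ ν → ν ≤ ζ → ∀ x,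
      s ν x - s (ν-1) x = A ν * ((∑ t, w ν t * x t) + b ν) := by
    intro ν h2 hν x
    simp only [hA, dif_pos (⟨h2, hν⟩ : 2 ≤ ν ∧ ν ≤ ζ)]
    exact (key ν h2 hν).choose_spec x
  have tele : ∀ m, m + 1 ≤ ζ → ∀ x : Fin n → ℝ,
      (∑ j ∈ Finset.range m, A (j+2) * ((∑ t, w (j+2) t * x t) + b (j+2)))
        = s (m+1) x - s 1 x := by
    intro m
    induction m with
    | zero => intro _ x; simp
    | succ m ih =>
      intro hm x
      rw [Finset.sum_range_succ, ih (by omega) x]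
      have h1 := hAspec (m+2) (by omega) (by omega) x
      have h3 : m + 2 - 1 = m + 1 := by omega
      rw [h3] at h1
      have h4 : m + 1 + 1 = m + 2 := by omega
      rw [h4]
      linarith
  obtain ⟨ζ', rfl⟩ : ∃ z, ζ = z + 1 := ⟨ζ - 1, by omega⟩
  refine ⟨fun k => if k.val = 0 then 0 else if k.val < ζ' + 1 then w (k.val + 1)
      else fun t => if (t : ℕ) = k.val - (ζ' + 1) then 1 else 0,
    fun k => if k.val = 0 then 1 else if k.val < ζ' + 1 then b (k.val + 1) else 0,
    fun k => if k.val = 0 then c1 else if k.val < ζ' + 1 then A (k.val + 1)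
      else if h : k.val - (ζ' + 1) < n then a1 ⟨k.val - (ζ' + 1), h⟩ else 0, ?_⟩
  intro i hi1 hiζ x hx
  have hx0 : (0 : Fin n → ℝ) ≤ x := (hRsub i hi1 hiζ hx).1
  rw [Fin.sum_univ_add]
  -- tail sum
  have htail : ∀ k : Fin n,
      (fun k : Fin (ζ' + 1 + n) =>
        (if k.val = 0 then c1 else if k.val < ζ' + 1 then A (k.val + 1)
          else if h : k.val - (ζ' + 1) < n then a1 ⟨k.val - (ζ' + 1), h⟩ else 0) *
        max 0 ((∑ t, (if k.val = 0 then (0 : Fin n → ℝ) else if k.val < ζ' + 1 then w (k.val + 1)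
          else fun t => if (t : ℕ) = k.val - (ζ' + 1) then 1 else 0) t * x t) +
          (if k.val = 0 then 1 else if k.val < ζ' + 1 then b (k.val + 1) else 0)))
        (Fin.natAdd (ζ' + 1) k) = a1 k * x k := by
    intro k
    have hk0 : (Fin.natAdd (ζ' + 1) k).val = ζ' + 1 + k.val := rfl
    simp only [hk0]
    rw [if_neg (by omega), if_neg (by omega), if_neg (by omega), if_neg (by omega)]
    have hsub : ζ' + 1 + k.val - (ζ' + 1) = k.val := by omega
    simp only [hsub]
    rw [dif_pos k.isLt]
    have hsum : (∑ t : Fin n, (if (t : ℕ) = (k : ℕ) then (1:ℝ) else 0) * x t) = x k := by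
      rw [Finset.sum_eq_single k]
      · simp
      · intro t _ ht; rw [if_neg (by simpa [Fin.val_inj] using ht)]; ring
      · intro h; exact absurd (Finset.mem_univ k) h
    rw [hsum, if_neg (by omega : ¬ ζ' + 1 + (k:ℕ) = 0), if_neg (by omega : ¬ ζ' + 1 + (k:ℕ) < ζ' + 1), add_zero, max_eq_right (show (0:ℝ) ≤ x k from hx0 k), Fin.eta]
  rw [Finset.sum_congr rfl (fun k _ => htail k)]
  -- head sum
  have hheadk : ∀ k : Fin (ζ' + 1),
      (fun k : Fin (ζ' + 1 + n) =>
        (if k.val = 0 then c1 else if k.val < ζ' + 1 then A (k.val + 1)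
          else if h : k.val - (ζ' + 1) < n then a1 ⟨k.val - (ζ' + 1), h⟩ else 0) *
        max 0 ((∑ t, (if k.val = 0 then (0 : Fin n → ℝ) else if k.val < ζ' + 1 then w (k.val + 1)
          else fun t => if (t : ℕ) = k.val - (ζ' + 1) then 1 else 0) t * x t) +
          (if k.val = 0 then 1 else if k.val < ζ' + 1 then b (k.val + 1) else 0)))
        (Fin.castAdd n k)
      = (fun m : ℕ => if m = 0 then c1
          else A (m + 1) * max 0 ((∑ t, w (m + 1) t * x t) + b (m + 1))) k.val := by
    intro k
    have hk0 : (Fin.castAdd n k).val = k.val := rfl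
    simp only [hk0]
    by_cases h0 : (k : ℕ) = 0
    · simp [h0]
    · simp [h0, k.isLt]
  rw [Finset.sum_congr rfl (fun k _ => hheadk k),
    Fin.sum_univ_eq_sum_range (fun m : ℕ => if m = 0 then c1
      else A (m + 1) * max 0 ((∑ t, w (m + 1) t * x t) + b (m + 1))) (ζ' + 1),
    Finset.sum_range_succ']
  norm_num
  -- middle sum
  have hmid : (∑ j ∈ Finset.range ζ',
      A (j + 1 + 1) * max 0 ((∑ t, w (j + 1 + 1) t * x t) + b (j + 1 + 1)))
      = s i x - s 1 x := by
    have step1 : ∀ j ∈ Finset.range ζ',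
        A (j + 1 + 1) * max 0 ((∑ t, w (j + 1 + 1) t * x t) + b (j + 1 + 1))
        = if j < i - 1 then A (j + 2) * ((∑ t, w (j + 2) t * x t) + b (j + 2)) else 0 := by
      intro j hj
      rw [Finset.mem_range] at hj
      have h2 : j + 1 + 1 = j + 2 := rfl
      by_cases hji : j < i - 1
      · rw [if_pos hji, h2, max_eq_right (hpos i hi1 hiζ (j + 2) (by omega) (by omega) x hx)]
      · rw [if_neg hji, h2,
          max_eq_left (hzero (j + 2) (by omega) (by omega) i hi1 (by omega) x hx), mul_zero]
    rw [Finset.sum_congr rfl step1]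
    have step2 : (∑ j ∈ Finset.range ζ',
        if j < i - 1 then A (j + 2) * ((∑ t, w (j + 2) t * x t) + b (j + 2)) else 0)
        = ∑ j ∈ Finset.range (i - 1),
            A (j + 2) * ((∑ t, w (j + 2) t * x t) + b (j + 2)) := by
      rw [← Finset.sum_subset (Finset.range_subset_range.mpr (by omega : i - 1 ≤ ζ'))
        (fun j _ hj => if_neg (by rw [Finset.mem_range] at hj; omega))]
      exact Finset.sum_congr rfl fun j hj => if_pos (Finset.mem_range.mp hj)
    rw [step2, tele (i - 1) (by omega) x]
    congr 2
    omega
  rw [hmid, hs1 x]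
  ring
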